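/- Let T : X → Y be a bounded linear operator between Banach spaces, let (x_n)_{n∈ℕ} be a sequence in X with ‖x_n‖ = 1 for all n, and let α > 0. Call a sequence (x̃_m)_{m∈ℕ} a block-subsequence of (x_n) if there exist nonempty finite sets of integers I_m with max I_m < min I_{m+1} for all m, and coefficients c_j ∈ [0,1] with Σ_{j∈I_m} c_j = 1, such that x̃_m = Σ_{j∈I_m} c_j x_j. Assume that for every block-subsequence (x̃_n) of (x_n) and every g ∈ Y one has limsup_{n→∞} ‖T(x̃_n) − g‖ ≥ α. Then for every weakly compact bounded linear operator S : X → Y, ‖T − S‖ ≥ α; that is, ‖T‖_{e,w} ≥ α. -/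

import Mathlib

open Filter

/-- `y` is a block-subsequence of `x`: there are nonempty finite sets of integers
`I m` with `max I m < min I (m+1)` and coefficients `c j ∈ [0,1]` summing to `1` on
each block, such that `y m = ∑_{j ∈ I m} c j • x j`. -/
def IsBlockSubsequence {X : Type*} [AddCommMonoid X] [Module ℝ X]
    (x y : ℕ → X) : Prop :=
  ∃ (I : ℕ → Finset ℕ) (c : ℕ → ℝ),
    (∀ m, (I m).Nonempty) ∧
    (∀ m, ∀ i ∈ I m, ∀ j ∈ I (m + 1), i < j) ∧
    (∀ j, c j ∈ Set.Icc (0:ℝ) 1) ∧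
    (∀ m, ∑ j ∈ I m, c j = 1) ∧
    (∀ m, y m = ∑ j ∈ I m, c j • x j)

/-- A bounded linear operator between normed spaces is weakly compact if the closure,
in the weak topology of the codomain, of the image of the closed unit ball is compact. -/
def IsWeaklyCompactOperator {X Y : Type*} [NormedAddCommGroup X] [NormedSpace ℝ X]
    [NormedAddCommGroup Y] [NormedSpace ℝ Y] (S : X →L[ℝ] Y) : Prop :=
  IsCompact (closure ((toWeakSpace ℝ Y) '' (⇑S '' Metric.closedBall 0 1)))

/-- Let `T : X → Y` be a bounded operator between Banach spaces and
`(x_n)` a normalized sequence such that for every block-subsequence `(x̃_n)` and every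
`g ∈ Y` one has `limsup ‖T x̃_n - g‖ ≥ α`. Then `‖T - S‖ ≥ α` for every weakly compact
operator `S`, i.e. `‖T‖_{e,w} ≥ α`. -/
theorem weakEssentialNorm_lower_bound_of_blockSubseq
    {X Y : Type*} [NormedAddCommGroup X] [NormedSpace ℝ X] [CompleteSpace X]
    [NormedAddCommGroup Y] [NormedSpace ℝ Y] [CompleteSpace Y]
    (T : X →L[ℝ] Y) (x : ℕ → X) (hx : ∀ n, ‖x n‖ = 1) (α : ℝ) (hα : 0 < α)
    (h : ∀ y : ℕ → X, IsBlockSubsequence x y → ∀ g : Y,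
      α ≤ limsup (fun n => ‖T (y n) - g‖) atTop) :
    ∀ S : X →L[ℝ] Y, IsWeaklyCompactOperator S → α ≤ ‖T - S‖ := by
  intro S hS
  classical
  -- The sequence in the weak space
  set f : ℕ → WeakSpace ℝ Y := fun n => toWeakSpace ℝ Y (S (x n)) with hf
  have hfK : ∀ n, f n ∈ closure ((toWeakSpace ℝ Y) '' (⇑S '' Metric.closedBall 0 1)) := by
    intro n
    apply subset_closure
    exact ⟨S (x n), ⟨x n, by simp [Metric.mem_closedBall, hx n], rfl⟩, rfl⟩
  -- get a weak cluster point
  obtain ⟨g', hg'K, hg'⟩ := hS.exists_clusterPt (f := Filter.map f atTop)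
    (le_principal_iff.mpr (Filter.eventually_map.mpr (Eventually.of_forall hfK)))
  set g : Y := (toWeakSpace ℝ Y).symm g' with hgdef
  -- for every M, g is in the norm closure of the convex hull of `S x j`, `j > M`
  have hg : ∀ M : ℕ, g ∈ closure (convexHull ℝ (⇑S '' (x '' Set.Ioi M))) := by
    intro M
    have hconv : Convex ℝ (convexHull ℝ (⇑S '' (x '' Set.Ioi M))) := convex_convexHull _ _
    have hcl : toWeakSpace ℝ Y '' closure (convexHull ℝ (⇑S '' (x '' Set.Ioi M))) =
        closure (toWeakSpace ℝ Y '' (convexHull ℝ (⇑S '' (x '' Set.Ioi M)))) :=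
      hconv.toWeakSpace_closure ℝ
    -- g' is a cluster point of tails
    have h1 : ClusterPt g' (𝓟 (f '' Set.Ioi M)) := by
      refine hg'.mono ?_
      have : Filter.map f atTop ≤ Filter.map f (𝓟 (Set.Ioi M)) :=
        Filter.map_mono (le_principal_iff.mpr (Filter.eventually_atTop.mpr ⟨M + 1, fun n hn => hn⟩))
      exact this.trans (le_of_eq (Filter.map_principal))
    have h2 : g' ∈ closure (f '' Set.Ioi M) := mem_closure_iff_clusterPt.mpr h1
    have h3 : f '' Set.Ioi M ⊆ toWeakSpace ℝ Y '' (convexHull ℝ (⇑S '' (x '' Set.Ioi M))) := by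
      rintro - ⟨n, hn, rfl⟩
      exact ⟨S (x n), subset_convexHull _ _ ⟨x n, ⟨n, hn, rfl⟩, rfl⟩, rfl⟩
    have h4 : g' ∈ toWeakSpace ℝ Y '' closure (convexHull ℝ (⇑S '' (x '' Set.Ioi M))) := by
      rw [hcl]
      exact closure_mono h3 h2
    obtain ⟨z, hz, hzg⟩ := h4
    have : z = g := by rw [hgdef, ← hzg]; simp
    rwa [← this]
  -- Key step: finite convex blocks of the x's beyond M mapped close to g
  have key : ∀ M : ℕ, ∀ ε : ℝ, 0 < ε → ∃ (I : Finset ℕ) (c : ℕ → ℝ),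
      I.Nonempty ∧ (∀ k ∈ I, M < k) ∧ (∀ k, c k ∈ Set.Icc (0:ℝ) 1) ∧
      (∑ k ∈ I, c k = 1) ∧ ‖S (∑ k ∈ I, c k • x k) - g‖ < ε := by
    intro M ε hε
    obtain ⟨p, hp, hpg⟩ := Metric.mem_closure_iff.mp (hg M) ε hε
    rw [convexHull_eq] at hp
    obtain ⟨ι, t, w, z, hw0, hw1, hz, hcm⟩ := hp
    -- choose indices
    have hzchoice : ∀ i ∈ t, ∃ j : ℕ, M < j ∧ z i = S (x j) := by
      intro i hi
      obtain ⟨v, ⟨n, hn, rfl⟩, hzi⟩ := hz i hi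
      exact ⟨n, hn, hzi.symm⟩
    choose! j hjM hjz using hzchoice
    have htne : t.Nonempty := by
      rcases t.eq_empty_or_nonempty with rfl | hne
      · simp at hw1
      · exact hne
    refine ⟨t.image j, fun k => ∑ i ∈ t.filter (fun i => j i = k), w i, htne.image _, ?_, ?_, ?_, ?_⟩
    · rintro k hk
      obtain ⟨i, hi, rfl⟩ := Finset.mem_image.mp hk
      exact hjM i hi
    · intro k
      constructor
      · exact Finset.sum_nonneg fun i hi => hw0 i (Finset.mem_filter.mp hi).1
      · calc ∑ i ∈ t.filter (fun i => j i = k), w i ≤ ∑ i ∈ t, w i :=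
              Finset.sum_le_sum_of_subset_of_nonneg (Finset.filter_subset _ _)
                (fun i hi _ => hw0 i hi)
          _ = 1 := hw1
    · rw [Finset.sum_fiberwise_of_maps_to (fun i hi => Finset.mem_image_of_mem j hi), hw1]
    · have hsum : S (∑ k ∈ t.image j, (∑ i ∈ t.filter (fun i => j i = k), w i) • x k) = p := by
        have e1 : ∀ k ∈ t.image j, (∑ i ∈ t.filter (fun i => j i = k), w i) • S (x k)
            = ∑ i ∈ t.filter (fun i => j i = k), w i • z i := by
          intro k hk
          rw [Finset.sum_smul]
          refine Finset.sum_congr rfl fun i hi => ?_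
          obtain ⟨hit, hji⟩ := Finset.mem_filter.mp hi
          rw [hjz i hit, hji]
        rw [map_sum]
        simp_rw [map_smul]
        rw [Finset.sum_congr rfl e1,
          Finset.sum_fiberwise_of_maps_to (fun i hi => Finset.mem_image_of_mem j hi)]
        rw [← hcm, Finset.centerMass_eq_of_sum_1 _ _ hw1]
      rw [hsum]
      rwa [dist_comm, dist_eq_norm] at hpg
  choose! I0 c0 kne kgt kIcc ksum knear using key
  -- build the blocks recursively
  set F : ℕ → Finset ℕ × (ℕ → ℝ) := fun m =>
    Nat.rec (motive := fun _ => Finset ℕ × (ℕ → ℝ))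
      (I0 0 1, c0 0 1)
      (fun m p => (I0 (p.1.sup id) (1 / (m + 2)), c0 (p.1.sup id) (1 / (m + 2)))) m with hF
  set I : ℕ → Finset ℕ := fun m => (F m).1 with hI
  set C : ℕ → (ℕ → ℝ) := fun m => (F m).2 with hC
  have hε : ∀ m : ℕ, (0:ℝ) < 1 / (m + 1) := by intro m; positivity
  -- each block comes from `key`
  have hFprop : ∀ m : ℕ, ∃ M : ℕ, I m = I0 M (1 / (m + 1)) ∧ C m = c0 M (1 / (m + 1)) ∧
      (m ≠ 0 → M = (I (m - 1)).sup id) := by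
    intro m
    cases m with
    | zero => exact ⟨0, by norm_num [hI, hC, hF], by norm_num [hI, hC, hF], by simp⟩
    | succ n =>
      have e : (1:ℝ) / (↑(n + 1) + 1) = 1 / (↑n + 2) := by push_cast; ring
      refine ⟨(I n).sup id, ?_, ?_, ?_⟩
      · show (F (n+1)).1 = _
        rw [e]
      · show (F (n+1)).2 = _
        rw [e]
      · intro _; simp
  have hIne : ∀ m, (I m).Nonempty := by
    intro m
    obtain ⟨M, h1, -, -⟩ := hFprop m
    rw [h1]; exact kne M _ (hε m)
  have hIgt : ∀ m, ∀ k ∈ I (m + 1), (I m).sup id < k := by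
    intro m k hk
    obtain ⟨M, h1, -, h3⟩ := hFprop (m + 1)
    have hM : M = (I m).sup id := by simpa using h3 (Nat.succ_ne_zero m)
    rw [h1] at hk
    rw [← hM]
    exact kgt M _ (hε (m + 1)) k hk
  have hadj : ∀ m, ∀ i ∈ I m, ∀ k ∈ I (m + 1), i < k := by
    intro m i hi k hk
    exact lt_of_le_of_lt (Finset.le_sup (f := id) hi) (hIgt m k hk)
  -- blocks are strictly increasing, hence disjoint
  have hmono : ∀ d m, ∀ i ∈ I m, ∀ k ∈ I (m + 1 + d), i < k := by
    intro d
    induction d with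
    | zero => exact hadj
    | succ n ih =>
      intro m i hi k hk
      obtain ⟨i', hi'⟩ := hIne (m + 1 + n)
      have h1 : i < i' := ih m i hi i' hi'
      have h2 : i' < k := hadj (m + 1 + n) i' hi' k hk
      omega
  have huniq : ∀ {m m' : ℕ} {k : ℕ}, k ∈ I m → k ∈ I m' → m = m' := by
    intro m m' k hk hk'
    by_contra hne
    rcases Nat.lt_or_ge m m' with hlt | hge
    · have := hmono (m' - m - 1) m k hk k (by convert hk' using 2; omega)
      omega
    · have hlt : m' < m := by omega
      have := hmono (m - m' - 1) m' k hk' k (by convert hk using 2; omega)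
      omega
  -- patch the coefficients together
  set c : ℕ → ℝ := fun k => if hk : ∃ m, k ∈ I m then C hk.choose k else 0 with hc
  have hcblock : ∀ m, ∀ k ∈ I m, c k = C m k := by
    intro m k hk
    have hex : ∃ m, k ∈ I m := ⟨m, hk⟩
    rw [hc]
    simp only [dif_pos hex]
    congr 1
    exact huniq hex.choose_spec hk
  have hcIcc : ∀ k, c k ∈ Set.Icc (0:ℝ) 1 := by
    intro k
    by_cases hex : ∃ m, k ∈ I m
    · have : c k = C hex.choose k := by rw [hc]; exact dif_pos hex
      rw [this]
      obtain ⟨M, -, h2, -⟩ := hFprop hex.choose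
      rw [h2]
      exact kIcc M _ (hε hex.choose) k
    · have : c k = 0 := by rw [hc]; exact dif_neg hex
      rw [this]
      exact ⟨le_refl 0, zero_le_one⟩
  have hcsum : ∀ m, ∑ k ∈ I m, c k = 1 := by
    intro m
    rw [Finset.sum_congr rfl (hcblock m)]
    obtain ⟨M, h1, h2, -⟩ := hFprop m
    rw [h1, h2]
    exact ksum M _ (hε m)
  -- the block subsequence
  set y : ℕ → X := fun m => ∑ k ∈ I m, c k • x k with hy
  have hblocky : IsBlockSubsequence x y :=
    ⟨I, c, hIne, hadj, hcIcc, hcsum, fun m => rfl⟩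
  have hSnear : ∀ m, ‖S (y m) - g‖ < 1 / (m + 1) := by
    intro m
    obtain ⟨M, h1, h2, -⟩ := hFprop m
    have : y m = ∑ k ∈ I0 M (1 / (m + 1)), c0 M (1 / (m + 1)) k • x k := by
      rw [hy]
      simp only
      rw [Finset.sum_congr h1 (fun k hk => by rw [hcblock m k (h1 ▸ hk), h2])]
    rw [this]
    exact knear M _ (hε m)
  have hynorm : ∀ m, ‖y m‖ ≤ 1 := by
    intro m
    calc ‖y m‖ ≤ ∑ k ∈ I m, ‖c k • x k‖ := norm_sum_le _ _
      _ = ∑ k ∈ I m, c k := by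
          refine Finset.sum_congr rfl fun k _ => ?_
          rw [norm_smul, hx k, mul_one, Real.norm_eq_abs, abs_of_nonneg (hcIcc k).1]
      _ = 1 := hcsum m
  -- final estimate
  have hTbound : ∀ m, ‖T (y m) - g‖ ≤ ‖T - S‖ + 1 / (m + 1) := by
    intro m
    have : T (y m) - g = (T - S) (y m) + (S (y m) - g) := by
      simp only [ContinuousLinearMap.sub_apply]
      abel
    rw [this]
    calc ‖(T - S) (y m) + (S (y m) - g)‖ ≤ ‖(T - S) (y m)‖ + ‖S (y m) - g‖ := norm_add_le _ _
      _ ≤ ‖T - S‖ * ‖y m‖ + 1 / (m + 1) :=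
          add_le_add ((T - S).le_opNorm _) (le_of_lt (hSnear m))
      _ ≤ ‖T - S‖ * 1 + 1 / (m + 1) :=
          add_le_add (mul_le_mul_of_nonneg_left (hynorm m) (norm_nonneg _)) le_rfl
      _ = ‖T - S‖ + 1 / (m + 1) := by ring
  have hαlim := h y hblocky g
  have hlim : Tendsto (fun m : ℕ => ‖T - S‖ + 1 / (m + 1)) atTop (nhds ‖T - S‖) := by
    have h0 : Tendsto (fun m : ℕ => 1 / ((m:ℝ) + 1)) atTop (nhds 0) :=
      tendsto_one_div_add_atTop_nhds_zero_nat
    have := tendsto_const_nhds (x := ‖T - S‖) (f := atTop (α := ℕ)) |>.add h0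
    simpa using this
  have hlimsup : limsup (fun n => ‖T (y n) - g‖) atTop ≤ ‖T - S‖ := by
    have h1 : limsup (fun n => ‖T (y n) - g‖) atTop ≤
        limsup (fun m : ℕ => ‖T - S‖ + 1 / (m + 1)) atTop := by
      exact limsup_le_limsup (Eventually.of_forall hTbound)
        ((isBoundedUnder_of (f := atTop) (u := fun n => ‖T (y n) - g‖)
          ⟨0, fun n => norm_nonneg _⟩ : IsBoundedUnder (· ≥ ·) atTop _).isCoboundedUnder_le)
        hlim.isBoundedUnder_le
    rwa [hlim.limsup_eq] at h1
  linarith
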